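/- Let W = U Σ V^T be a singular value decomposition of W ∈ ℝ^{N×N} and let τ > 0. Then Z* = U S_τ(Σ) V^T, where S_τ(Σ) replaces each singular value σ_i by max(σ_i − τ, 0), is a minimizer of h(Z) = τ ‖Z‖_* + (1/2) ‖Z − W‖_F². -/

import Mathlib

open Matrix

/-- Squared Frobenius norm of a matrix. -/
def frobSq {m n : ℕ} (A : Matrix (Fin m) (Fin n) ℝ) : ℝ := ∑ i, ∑ j, (A i j) ^ 2

/-- Nuclear norm: the sum of the singular values. -/
noncomputable def nuclearNorm {N : ℕ} (Z : Matrix (Fin N) (Fin N) ℝ) : ℝ :=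
  ∑ i, Real.sqrt ((Matrix.isHermitian_iff_isSymm.mpr (Matrix.isSymm_transpose_mul_self Z)).eigenvalues i)

namespace SVTAux

variable {N : ℕ}

lemma frobSq_eq_trace (A : Matrix (Fin N) (Fin N) ℝ) :
    frobSq A = Matrix.trace (Aᵀ * A) := by
  simp only [frobSq, Matrix.trace, Matrix.diag, Matrix.mul_apply, Matrix.transpose_apply, sq]
  exact Finset.sum_comm

lemma frobSq_nonneg (A : Matrix (Fin N) (Fin N) ℝ) : 0 ≤ frobSq A := by
  apply Finset.sum_nonneg; intro i _; apply Finset.sum_nonneg; intro j _; positivity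

lemma orth1 (Q : Matrix.unitaryGroup (Fin N) ℝ) :
    (Q : Matrix (Fin N) (Fin N) ℝ)ᵀ * (Q : Matrix (Fin N) (Fin N) ℝ) = 1 := by
  have := (Matrix.mem_unitaryGroup_iff').mp Q.2
  simpa [Matrix.star_eq_conjTranspose, Matrix.conjTranspose_eq_transpose_of_trivial] using this

lemma orth2 (Q : Matrix.unitaryGroup (Fin N) ℝ) :
    (Q : Matrix (Fin N) (Fin N) ℝ) * (Q : Matrix (Fin N) (Fin N) ℝ)ᵀ = 1 := by
  have := (Matrix.mem_unitaryGroup_iff).mp Q.2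
  simpa [Matrix.star_eq_conjTranspose, Matrix.conjTranspose_eq_transpose_of_trivial] using this

/-- real form of the spectral theorem for `Zᵀ * Z` -/
lemma spec (Z : Matrix (Fin N) (Fin N) ℝ) :
    Zᵀ * Z = (((Matrix.isHermitian_iff_isSymm.mpr (Matrix.isSymm_transpose_mul_self Z))).eigenvectorUnitary :
        Matrix (Fin N) (Fin N) ℝ)
      * Matrix.diagonal (((Matrix.isHermitian_iff_isSymm.mpr (Matrix.isSymm_transpose_mul_self Z))).eigenvalues)
      * (((Matrix.isHermitian_iff_isSymm.mpr (Matrix.isSymm_transpose_mul_self Z))).eigenvectorUnitary :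
        Matrix (Fin N) (Fin N) ℝ)ᵀ := by
  have := ((Matrix.isHermitian_iff_isSymm.mpr (Matrix.isSymm_transpose_mul_self Z))).spectral_theorem
  simpa [Matrix.star_eq_conjTranspose, Matrix.conjTranspose_eq_transpose_of_trivial,
    RCLike.ofReal_real_eq_id] using this

lemma col_sq (A : Matrix (Fin N) (Fin N) ℝ) (k : Fin N) :
    ∑ i, (A i k) ^ 2 = (Aᵀ * A) k k := by
  simp [Matrix.mul_apply, sq]

lemma entry_formula (R : Matrix (Fin N) (Fin N) ℝ) (f : Fin N → ℝ) (k : Fin N) :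
    (Rᵀ * Matrix.diagonal f * R) k k = ∑ j, f j * (R j k) ^ 2 := by
  rw [Matrix.mul_assoc, Matrix.mul_apply]
  apply Finset.sum_congr rfl
  intro j _
  rw [Matrix.diagonal_mul, Matrix.transpose_apply]
  ring

/-- Key dual bound: `⟨U diag(m) Vᵀ, Z⟩ ≤ τ * ‖Z‖_*` when `0 ≤ m ≤ τ`. -/
lemma trace_mul_le_nuclear (Z U V : Matrix (Fin N) (Fin N) ℝ)
    (hU : Uᵀ * U = 1) (hV : Vᵀ * V = 1) (m : Fin N → ℝ) (τ : ℝ) (hτ : 0 ≤ τ)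
    (hm0 : ∀ i, 0 ≤ m i) (hmτ : ∀ i, m i ≤ τ) :
    Matrix.trace ((U * Matrix.diagonal m * Vᵀ)ᵀ * Z) ≤ τ * nuclearNorm Z := by
  have hZ := (Matrix.isHermitian_iff_isSymm.mpr (Matrix.isSymm_transpose_mul_self Z))
  set μ : Fin N → ℝ := hZ.eigenvalues with hμdef
  set Q : Matrix (Fin N) (Fin N) ℝ := (hZ.eigenvectorUnitary : Matrix (Fin N) (Fin N) ℝ)
    with hQdef
  have hQ1 : Qᵀ * Q = 1 := orth1 _
  have hQ2 : Q * Qᵀ = 1 := orth2 _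
  have hVV : V * Vᵀ = 1 := mul_eq_one_comm.mp hV
  set G : Matrix (Fin N) (Fin N) ℝ := U * Matrix.diagonal m * Vᵀ with hGdef
  set R : Matrix (Fin N) (Fin N) ℝ := Vᵀ * Q with hRdef
  have hRR : Rᵀ * R = 1 := by
    have : Rᵀ * R = Qᵀ * (V * Vᵀ) * Q := by
      rw [hRdef]
      simp only [Matrix.transpose_mul, Matrix.transpose_transpose]
      noncomm_ring
    rw [this, hVV, mul_one, hQ1]
  -- columns of Z*Q have squared norm μ k
  have hZcol : ∀ k, ∑ i, ((Z * Q) i k) ^ 2 = μ k := by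
    intro k
    rw [col_sq]
    have h : (Z * Q)ᵀ * (Z * Q) = Matrix.diagonal μ := by
      have e1 : (Z * Q)ᵀ * (Z * Q) = Qᵀ * (Zᵀ * Z) * Q := by
        simp only [Matrix.transpose_mul]
        noncomm_ring
      rw [e1, spec Z, ← hμdef, ← hQdef]
      have e2 : Qᵀ * (Q * Matrix.diagonal μ * Qᵀ) * Q
          = (Qᵀ * Q) * Matrix.diagonal μ * (Qᵀ * Q) := by noncomm_ring
      rw [e2, hQ1, one_mul, mul_one]
    rw [h, Matrix.diagonal_apply_eq]
  -- columns of G*Q have squared norm ≤ τ^2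
  have hGcol : ∀ k, ∑ i, ((G * Q) i k) ^ 2 ≤ τ ^ 2 := by
    intro k
    rw [col_sq]
    have hGG : (G * Q)ᵀ * (G * Q) = Rᵀ * Matrix.diagonal (fun j => m j ^ 2) * R := by
      have e1 : (G * Q)ᵀ * (G * Q)
          = Qᵀ * V * (Matrix.diagonal m * (Uᵀ * U) * Matrix.diagonal m) * (Vᵀ * Q) := by
        rw [hGdef]
        simp only [Matrix.transpose_mul, Matrix.transpose_transpose,
          Matrix.diagonal_transpose]
        noncomm_ring
      rw [e1, hU, mul_one, Matrix.diagonal_mul_diagonal]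
      have e2 : Matrix.diagonal (fun j => m j * m j) = Matrix.diagonal (fun j => m j ^ 2) := by
        congr 1; funext j; ring
      rw [e2, hRdef]
      simp only [Matrix.transpose_mul, Matrix.transpose_transpose]
    rw [hGG, entry_formula]
    have hcol1 : ∑ j, (R j k) ^ 2 = 1 := by
      rw [col_sq, hRR, Matrix.one_apply_eq]
    calc ∑ j, m j ^ 2 * (R j k) ^ 2 ≤ ∑ j, τ ^ 2 * (R j k) ^ 2 := by
          apply Finset.sum_le_sum
          intro j _
          exact mul_le_mul_of_nonneg_right
            (sq_le_sq' (by linarith [hm0 j, hmτ j]) (hmτ j)) (sq_nonneg _)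
    _ = τ ^ 2 := by rw [← Finset.mul_sum, hcol1, mul_one]
  -- the trace as a sum over columns
  have htr : Matrix.trace (Gᵀ * Z) = ∑ k, ∑ i, (G * Q) i k * (Z * Q) i k := by
    have h1 : Matrix.trace (Gᵀ * Z) = Matrix.trace ((G * Q)ᵀ * (Z * Q)) := by
      have e1 : (G * Q)ᵀ * (Z * Q) = Qᵀ * (Gᵀ * Z * Q) := by
        simp only [Matrix.transpose_mul]
        noncomm_ring
      rw [e1, Matrix.trace_mul_comm Qᵀ (Gᵀ * Z * Q)]
      have e2 : Gᵀ * Z * Q * Qᵀ = Gᵀ * Z * (Q * Qᵀ) := by noncomm_ring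
      rw [e2, hQ2, mul_one]
    rw [h1]
    simp only [Matrix.trace, Matrix.diag, Matrix.mul_apply, Matrix.transpose_apply]
  rw [htr]
  have hbound : ∀ k, ∑ i, (G * Q) i k * (Z * Q) i k ≤ τ * Real.sqrt (μ k) := by
    intro k
    calc ∑ i, (G * Q) i k * (Z * Q) i k
        ≤ Real.sqrt (∑ i, ((G * Q) i k) ^ 2) * Real.sqrt (∑ i, ((Z * Q) i k) ^ 2) :=
          Real.sum_mul_le_sqrt_mul_sqrt _ _ _
    _ ≤ τ * Real.sqrt (μ k) := by
        rw [hZcol k]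
        apply mul_le_mul_of_nonneg_right _ (Real.sqrt_nonneg _)
        calc Real.sqrt (∑ i, ((G * Q) i k) ^ 2) ≤ Real.sqrt (τ ^ 2) :=
              Real.sqrt_le_sqrt (hGcol k)
        _ = τ := Real.sqrt_sq hτ
  calc ∑ k, ∑ i, (G * Q) i k * (Z * Q) i k ≤ ∑ k, τ * Real.sqrt (μ k) :=
        Finset.sum_le_sum fun k _ => hbound k
  _ = τ * nuclearNorm Z := by rw [← Finset.mul_sum]; rfl

/-- Nuclear norm of `U diag(d) Vᵀ` is `∑ d` for nonnegative `d`. -/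
lemma nuclearNorm_udv (U V : Matrix (Fin N) (Fin N) ℝ)
    (hU : Uᵀ * U = 1) (hV : Vᵀ * V = 1) (d : Fin N → ℝ) (hd : ∀ i, 0 ≤ d i) :
    nuclearNorm (U * Matrix.diagonal d * Vᵀ) = ∑ i, d i := by
  set A : Matrix (Fin N) (Fin N) ℝ := U * Matrix.diagonal d * Vᵀ with hAdef
  have hA := (Matrix.isHermitian_iff_isSymm.mpr (Matrix.isSymm_transpose_mul_self A))
  set μ : Fin N → ℝ := hA.eigenvalues with hμdef
  set Q : Matrix (Fin N) (Fin N) ℝ := (hA.eigenvectorUnitary : Matrix (Fin N) (Fin N) ℝ)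
    with hQdef
  have hQ1 : Qᵀ * Q = 1 := orth1 _
  have hQ2 : Q * Qᵀ = 1 := orth2 _
  have hVV : V * Vᵀ = 1 := mul_eq_one_comm.mp hV
  set R : Matrix (Fin N) (Fin N) ℝ := Vᵀ * Q with hRdef
  have hRR : Rᵀ * R = 1 := by
    have : Rᵀ * R = Qᵀ * (V * Vᵀ) * Q := by
      rw [hRdef]
      simp only [Matrix.transpose_mul, Matrix.transpose_transpose]
      noncomm_ring
    rw [this, hVV, mul_one, hQ1]
  have hRR' : R * Rᵀ = 1 := mul_eq_one_comm.mp hRR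
  -- A^T A = V diag(d^2) V^T
  have hAA : Aᵀ * A = V * Matrix.diagonal (fun j => d j ^ 2) * Vᵀ := by
    have e1 : Aᵀ * A = V * (Matrix.diagonal d * (Uᵀ * U) * Matrix.diagonal d) * Vᵀ := by
      rw [hAdef]
      simp only [Matrix.transpose_mul, Matrix.transpose_transpose, Matrix.diagonal_transpose]
      noncomm_ring
    rw [e1, hU, mul_one, Matrix.diagonal_mul_diagonal]
    congr 2
    funext j
    ring
  -- commutation relation: diag(d^2) R = R diag(μ)
  have hcomm : Matrix.diagonal (fun j => d j ^ 2) * R = R * Matrix.diagonal μ := by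
    have e1 : Aᵀ * A * Q = Q * Matrix.diagonal μ := by
      rw [spec A, ← hμdef, ← hQdef]
      have : Q * Matrix.diagonal μ * Qᵀ * Q = Q * Matrix.diagonal μ * (Qᵀ * Q) := by
        noncomm_ring
      rw [this, hQ1, mul_one]
    have e2 : V * Matrix.diagonal (fun j => d j ^ 2) * Vᵀ * Q = Q * Matrix.diagonal μ := by
      rw [← hAA]; exact e1
    have e3 : Vᵀ * (V * Matrix.diagonal (fun j => d j ^ 2) * Vᵀ * Q)
        = Vᵀ * (Q * Matrix.diagonal μ) := by rw [e2]
    have e4 : Vᵀ * (V * Matrix.diagonal (fun j => d j ^ 2) * Vᵀ * Q)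
        = (Vᵀ * V) * (Matrix.diagonal (fun j => d j ^ 2) * (Vᵀ * Q)) := by noncomm_ring
    have e5 : Vᵀ * (Q * Matrix.diagonal μ) = (Vᵀ * Q) * Matrix.diagonal μ := by noncomm_ring
    rw [e4, hV, one_mul, e5] at e3
    rw [hRdef]
    exact e3
  have key : ∀ j k, d j ^ 2 * R j k = R j k * μ k := by
    intro j k
    have := congrFun (congrFun hcomm j) k
    simpa [Matrix.diagonal_mul, Matrix.mul_diagonal] using this
  have pw : ∀ j k, Real.sqrt (μ k) * (R j k) ^ 2 = d j * (R j k) ^ 2 := by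
    intro j k
    rcases eq_or_ne (R j k) 0 with h | h
    · simp [h]
    · have hμk : μ k = d j ^ 2 := by
        have h1 := key j k
        have h2 : d j ^ 2 * R j k = μ k * R j k := by rw [h1]; ring
        exact (mul_right_cancel₀ h h2).symm
      rw [hμk, Real.sqrt_sq (hd j)]
  have hcol : ∀ k, ∑ j, (R j k) ^ 2 = 1 := by
    intro k
    rw [col_sq, hRR, Matrix.one_apply_eq]
  have hrow : ∀ j, ∑ k, (R j k) ^ 2 = 1 := by
    intro j
    have : ∑ k, (R j k) ^ 2 = (R * Rᵀ) j j := by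
      simp [Matrix.mul_apply, sq]
    rw [this, hRR', Matrix.one_apply_eq]
  calc nuclearNorm A = ∑ k, Real.sqrt (μ k) := rfl
  _ = ∑ k, Real.sqrt (μ k) * ∑ j, (R j k) ^ 2 := by
      apply Finset.sum_congr rfl
      intro k _
      rw [hcol k, mul_one]
  _ = ∑ k, ∑ j, Real.sqrt (μ k) * (R j k) ^ 2 := by
      apply Finset.sum_congr rfl
      intro k _
      rw [Finset.mul_sum]
  _ = ∑ k, ∑ j, d j * (R j k) ^ 2 := by
      apply Finset.sum_congr rfl
      intro k _
      exact Finset.sum_congr rfl fun j _ => pw j k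
  _ = ∑ j, ∑ k, d j * (R j k) ^ 2 := Finset.sum_comm
  _ = ∑ j, d j := by
      apply Finset.sum_congr rfl
      intro j _
      rw [← Finset.mul_sum, hrow j, mul_one]



/-- Trace inner product of two `U diag(·) Vᵀ` matrices. -/
lemma trace_udv_udv (U V : Matrix (Fin N) (Fin N) ℝ)
    (hU : Uᵀ * U = 1) (hV : Vᵀ * V = 1) (m d : Fin N → ℝ) :
    Matrix.trace ((U * Matrix.diagonal m * Vᵀ)ᵀ * (U * Matrix.diagonal d * Vᵀ))
      = ∑ i, m i * d i := by
  have e1 : (U * Matrix.diagonal m * Vᵀ)ᵀ * (U * Matrix.diagonal d * Vᵀ)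
      = V * (Matrix.diagonal m * (Uᵀ * U) * Matrix.diagonal d) * Vᵀ := by
    simp only [Matrix.transpose_mul, Matrix.transpose_transpose, Matrix.diagonal_transpose]
    noncomm_ring
  rw [e1, hU, mul_one, Matrix.diagonal_mul_diagonal,
    Matrix.trace_mul_comm (V * Matrix.diagonal (fun i => m i * d i)) Vᵀ]
  have e2 : Vᵀ * (V * Matrix.diagonal (fun i => m i * d i))
      = (Vᵀ * V) * Matrix.diagonal (fun i => m i * d i) := by noncomm_ring
  rw [e2, hV, one_mul, Matrix.trace_diagonal]

/-- expansion of the squared Frobenius norm -/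
lemma frobSq_add (X Y : Matrix (Fin N) (Fin N) ℝ) :
    frobSq (X + Y) = frobSq X + 2 * Matrix.trace (Yᵀ * X) + frobSq Y := by
  simp only [frobSq_eq_trace]
  have e1 : (X + Y)ᵀ * (X + Y) = Xᵀ * X + (Xᵀ * Y + (Yᵀ * X + Yᵀ * Y)) := by
    simp only [Matrix.transpose_add]
    noncomm_ring
  rw [e1, Matrix.trace_add, Matrix.trace_add, Matrix.trace_add]
  have e2 : Matrix.trace (Xᵀ * Y) = Matrix.trace (Yᵀ * X) := by
    rw [← Matrix.trace_transpose (Xᵀ * Y), Matrix.transpose_mul, Matrix.transpose_transpose]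
  rw [e2]
  ring

end SVTAux

theorem svt_minimizer (N : ℕ) (W U V : Matrix (Fin N) (Fin N) ℝ)
    (hU : Uᵀ * U = 1) (hV : Vᵀ * V = 1) (σ : Fin N → ℝ) (hσ : ∀ i, 0 ≤ σ i)
    (hW : W = U * Matrix.diagonal σ * Vᵀ) (τ : ℝ) (hτ : 0 < τ) :
    ∀ Z : Matrix (Fin N) (Fin N) ℝ,
      τ * nuclearNorm (U * Matrix.diagonal (fun i => max (σ i - τ) 0) * Vᵀ) +
        (1 / 2) * frobSq ((U * Matrix.diagonal (fun i => max (σ i - τ) 0) * Vᵀ) - W)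
      ≤ τ * nuclearNorm Z + (1 / 2) * frobSq (Z - W) := by
  intro Z
  set d : Fin N → ℝ := fun i => max (σ i - τ) 0 with hddef
  set m : Fin N → ℝ := fun i => min (σ i) τ with hmdef
  set Zs : Matrix (Fin N) (Fin N) ℝ := U * Matrix.diagonal d * Vᵀ with hZsdef
  have hd0 : ∀ i, 0 ≤ d i := fun i => le_max_right _ _
  have hm0 : ∀ i, 0 ≤ m i := fun i => le_min (hσ i) hτ.le
  have hmτ : ∀ i, m i ≤ τ := fun i => min_le_right _ _
  -- nuclear norm of Zs
  have hnnZs : nuclearNorm Zs = ∑ i, d i := SVTAux.nuclearNorm_udv U V hU hV d hd0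
  -- W - Zs = U diag(m) Vᵀ
  have hWZs : W - Zs = U * Matrix.diagonal m * Vᵀ := by
    rw [hW, hZsdef]
    have e1 : U * Matrix.diagonal σ * Vᵀ - U * Matrix.diagonal d * Vᵀ
        = U * (Matrix.diagonal σ - Matrix.diagonal d) * Vᵀ := by noncomm_ring
    have hfun : ∀ i, σ i - d i = m i := by
      intro i
      simp only [hddef, hmdef]
      rcases le_total (σ i) τ with h | h
      · rw [max_eq_right (by linarith : σ i - τ ≤ 0), min_eq_left h]; ring
      · rw [max_eq_left (by linarith : (0:ℝ) ≤ σ i - τ), min_eq_right h]; ring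
    have e2 : Matrix.diagonal σ - Matrix.diagonal d = Matrix.diagonal m := by
      rw [Matrix.diagonal_sub]
      exact congrArg Matrix.diagonal (funext hfun)
    rw [e1, e2]
  -- ⟨U diag m Vᵀ, Zs⟩ = τ ∑ d
  have htrZs : Matrix.trace ((U * Matrix.diagonal m * Vᵀ)ᵀ * Zs) = τ * ∑ i, d i := by
    rw [hZsdef, SVTAux.trace_udv_udv U V hU hV m d, Finset.mul_sum]
    apply Finset.sum_congr rfl
    intro i _
    simp only [hddef, hmdef]
    rcases le_total (σ i) τ with h | h
    · rw [max_eq_right (by linarith : σ i - τ ≤ 0)]; ring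
    · rw [max_eq_left (by linarith : (0:ℝ) ≤ σ i - τ), min_eq_right h]
  -- dual bound
  have hdual : Matrix.trace ((U * Matrix.diagonal m * Vᵀ)ᵀ * Z) ≤ τ * nuclearNorm Z :=
    SVTAux.trace_mul_le_nuclear Z U V hU hV m τ hτ.le hm0 hmτ
  -- expansion
  have hexp : frobSq (Z - W)
      = frobSq (Z - Zs) + 2 * Matrix.trace ((Zs - W)ᵀ * (Z - Zs)) + frobSq (Zs - W) := by
    have e1 : Z - W = (Z - Zs) + (Zs - W) := by abel
    rw [e1, SVTAux.frobSq_add]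
  -- cross term
  have hcross : Matrix.trace ((Zs - W)ᵀ * (Z - Zs))
      = -(Matrix.trace ((U * Matrix.diagonal m * Vᵀ)ᵀ * Z)) + τ * ∑ i, d i := by
    have e1 : Zs - W = -(W - Zs) := by abel
    rw [e1, hWZs]
    have e2 : (-(U * Matrix.diagonal m * Vᵀ))ᵀ * (Z - Zs)
        = -((U * Matrix.diagonal m * Vᵀ)ᵀ * Z) + (U * Matrix.diagonal m * Vᵀ)ᵀ * Zs := by
      simp only [Matrix.transpose_neg]
      noncomm_ring
    rw [e2, Matrix.trace_add, Matrix.trace_neg, htrZs]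
  have hfz : 0 ≤ frobSq (Z - Zs) := SVTAux.frobSq_nonneg _
  rw [hnnZs, hexp, hcross]
  linarith [hdual]
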